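/- Let n : ℕ and let D be a diagonal matrix over ℂ indexed by (Fin n → ZMod 2) that is unitary. Then there exists θ : Finset (Fin n) → ℝ such that for every x : Fin n → ZMod 2, the diagonal entry D x x equals Complex.exp (Complex.I * ∑ over s : Finset (Fin n) of θ s * χ_s(x)), where χ_s(x) = (-1)^(number of i ∈ s with x i = 1). -/

import Mathlib

lemma chi_as_prod (n : ℕ) (x : Fin n → ZMod 2) (s : Finset (Fin n)) :
    (-1 : ℝ) ^ (s.filter (fun i => x i = 1)).card
      = ∏ i ∈ s, (if x i = 1 then (-1 : ℝ) else 1) := by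
  rw [Finset.prod_ite, Finset.prod_const, Finset.prod_const_one, mul_one]

lemma chi_orth (n : ℕ) (x y : Fin n → ZMod 2) :
    (∑ s : Finset (Fin n),
      (-1 : ℝ) ^ (s.filter (fun i => y i = 1)).card
        * (-1 : ℝ) ^ (s.filter (fun i => x i = 1)).card)
      = if y = x then (2 : ℝ) ^ n else 0 := by
  have h1 : ∀ s : Finset (Fin n),
      (-1 : ℝ) ^ (s.filter (fun i => y i = 1)).card
        * (-1 : ℝ) ^ (s.filter (fun i => x i = 1)).card
      = ∏ i ∈ s, ((if y i = 1 then (-1 : ℝ) else 1) * (if x i = 1 then (-1 : ℝ) else 1)) := by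
    intro s
    rw [chi_as_prod, chi_as_prod, Finset.prod_mul_distrib]
  simp only [h1]
  have h2 : (∑ s : Finset (Fin n),
      ∏ i ∈ s, ((if y i = 1 then (-1 : ℝ) else 1) * (if x i = 1 then (-1 : ℝ) else 1)))
      = ∏ i : Fin n, (((if y i = 1 then (-1 : ℝ) else 1) * (if x i = 1 then (-1 : ℝ) else 1)) + 1) := by
    rw [Finset.prod_add]
    rw [← Finset.powerset_univ]
    refine Finset.sum_congr rfl fun t ht => ?_
    simp
  rw [h2]
  by_cases hxy : y = x
  · subst hxy
    rw [if_pos rfl]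
    have : ∀ i : Fin n,
        ((if y i = 1 then (-1 : ℝ) else 1) * (if y i = 1 then (-1 : ℝ) else 1)) + 1 = 2 := by
      intro i; by_cases h : y i = 1 <;> simp [h] <;> norm_num
    simp only [this, Finset.prod_const, Finset.card_univ, Fintype.card_fin]
  · rw [if_neg hxy]
    obtain ⟨i, hi⟩ : ∃ i, y i ≠ x i := by
      by_contra h
      push_neg at h
      exact hxy (funext h)
    apply Finset.prod_eq_zero (Finset.mem_univ i)
    have hy := y i; have hx := x i
    rcases (by decide : ∀ a : ZMod 2, a = 0 ∨ a = 1) (y i) with h1 | h1 <;>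
      rcases (by decide : ∀ a : ZMod 2, a = 0 ∨ a = 1) (x i) with h2 | h2 <;>
      simp [h1, h2] at hi ⊢ <;> norm_num

theorem diagonal_unitary_as_morse_phases (n : ℕ)
    (D : Matrix (Fin n → ZMod 2) (Fin n → ZMod 2) ℂ)
    (hdiag : D.IsDiag) (hunit : D ∈ Matrix.unitaryGroup (Fin n → ZMod 2) ℂ) :
    ∃ θ : Finset (Fin n) → ℝ, ∀ x : Fin n → ZMod 2,
      D x x = Complex.exp (Complex.I *
        ((∑ s : Finset (Fin n),
          θ s * (-1 : ℝ) ^ (s.filter (fun i => x i = 1)).card : ℝ) : ℂ)) := by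
  -- each diagonal entry has modulus 1
  have habs : ∀ x, ‖D x x‖ = 1 := by
    intro x
    have h := hunit.1
    have h2 : (star D * D) x x = (1 : Matrix _ _ ℂ) x x := by rw [h]
    rw [Matrix.mul_apply] at h2
    have h3 : ∑ y, (star D) x y * D y x = (starRingEnd ℂ) (D x x) * D x x := by
      rw [Finset.sum_eq_single x]
      · rfl
      · intro y _ hy
        rw [hdiag hy, mul_zero]
      · intro h; exact absurd (Finset.mem_univ x) h
    rw [h3, Matrix.one_apply_eq] at h2
    have := congrArg (‖·‖) h2
    rw [norm_mul, Complex.norm_conj, norm_one] at this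
    nlinarith [norm_nonneg (D x x)]
  set ω : (Fin n → ZMod 2) → ℝ := fun x => (D x x).arg with hω
  have hD : ∀ x, D x x = Complex.exp (Complex.I * (ω x : ℂ)) := by
    intro x
    have := Complex.norm_mul_exp_arg_mul_I (D x x)
    rw [habs x, Complex.ofReal_one, one_mul] at this
    rw [← this, mul_comm]
  refine ⟨fun s => (∑ y, ω y * (-1 : ℝ) ^ (s.filter (fun i => y i = 1)).card) / 2 ^ n,
    fun x => ?_⟩
  rw [hD x]
  congr 2
  have hsum : (∑ s : Finset (Fin n),
      (∑ y, ω y * (-1 : ℝ) ^ (s.filter (fun i => y i = 1)).card) / 2 ^ n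
        * (-1 : ℝ) ^ (s.filter (fun i => x i = 1)).card) = ω x := by
    calc (∑ s : Finset (Fin n),
          (∑ y, ω y * (-1 : ℝ) ^ (s.filter (fun i => y i = 1)).card) / 2 ^ n
            * (-1 : ℝ) ^ (s.filter (fun i => x i = 1)).card)
        = (∑ s : Finset (Fin n), ∑ y, ω y *
            ((-1 : ℝ) ^ (s.filter (fun i => y i = 1)).card
              * (-1 : ℝ) ^ (s.filter (fun i => x i = 1)).card)) / 2 ^ n := by
          rw [Finset.sum_div]
          refine Finset.sum_congr rfl fun s _ => ?_
          rw [div_mul_eq_mul_div, Finset.sum_mul]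
          congr 1
          refine Finset.sum_congr rfl fun y _ => ?_
          ring
      _ = (∑ y, ω y * ∑ s : Finset (Fin n),
            ((-1 : ℝ) ^ (s.filter (fun i => y i = 1)).card
              * (-1 : ℝ) ^ (s.filter (fun i => x i = 1)).card)) / 2 ^ n := by
          rw [Finset.sum_comm]
          congr 1
          refine Finset.sum_congr rfl fun y _ => ?_
          rw [Finset.mul_sum]
      _ = ω x := by
          have key : ∀ y : Fin n → ZMod 2,
              ω y * ∑ s : Finset (Fin n),
                ((-1 : ℝ) ^ (s.filter (fun i => y i = 1)).card
                  * (-1 : ℝ) ^ (s.filter (fun i => x i = 1)).card)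
              = if y = x then ω y * 2 ^ n else 0 := by
            intro y
            rw [chi_orth]
            split <;> simp
          simp only [key]
          rw [Finset.sum_ite_eq' Finset.univ x (fun y => ω y * 2 ^ n),
            if_pos (Finset.mem_univ x)]
          field_simp
  exact congrArg Complex.ofReal hsum.symm
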